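/- (Galois descent for smooth semilinear actions) Let K/k be a Galois field extension with Galois group G = Gal(K/k) carrying the Krull topology, and let M be a K-vector space equipped with an action ρ of G by additive bijections satisfying: ρ(στ) = ρ(σ)∘ρ(τ), ρ(1) = id, and ρ(σ)(c·m) = σ(c)·ρ(σ)(m) for all σ,τ ∈ G, c ∈ K, m ∈ M (semilinearity); assume moreover the action is smooth, i.e. for each m ∈ M the stabilizer {σ ∈ G : ρ(σ)(m) = m} is open in G. Then, writing M^G = {m ∈ M : ρ(σ)(m) = m for all σ ∈ G}, which is a k-subspace of M, the canonical K-linear map K ⊗_k M^G → M sending c ⊗ m to c·m is bijective. -/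

import Mathlib

open scoped TensorProduct

/-- The canonical `k`-linear map `K ⊗_k S → M`, `c ⊗ m ↦ c • m`, for a `k`-submodule
`S` of a `K`-vector space `M` (with `K` a `k`-algebra acting compatibly). -/
noncomputable def galoisDescentMap (k K M : Type*) [CommRing k] [CommRing K]
    [Algebra k K] [AddCommGroup M] [Module K M] [Module k M] [IsScalarTower k K M]
    (S : Submodule k M) : K ⊗[k] S →ₗ[k] M :=
  TensorProduct.lift
    { toFun := fun c => c • (S.subtype)
      map_add' := fun c d => by simp [add_smul]
      map_smul' := fun a c => by simp [smul_assoc] }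

section Aux

variable {k K : Type*} [Field k] [Field K] [Algebra k K] [IsGalois k K]

/-- An element of a (possibly infinite) Galois extension fixed by every automorphism
lies in the base field. -/
lemma fixed_of_all_aut (x : K) (hx : ∀ σ : K ≃ₐ[k] K, σ x = x) :
    ∃ a : k, algebraMap k K a = x := by
  have hint : IsIntegral k x := Algebra.IsIntegral.isIntegral x
  let E : IntermediateField k K := IntermediateField.adjoin k {x}
  haveI : FiniteDimensional k E := IntermediateField.adjoin.finiteDimensional hint
  let L : IntermediateField k K := IntermediateField.normalClosure k ↥E K
  have hxL : x ∈ L := E.le_normalClosure (IntermediateField.mem_adjoin_simple_self k x)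
  set x' : ↥L := ⟨x, hxL⟩ with hx'def
  have hfix : ∀ σ : ↥L ≃ₐ[k] ↥L, σ x' = x' := by
    intro σ
    have h1 : (σ.liftNormal K) (algebraMap ↥L K x') = algebraMap ↥L K (σ x') :=
      AlgEquiv.liftNormal_commutes σ K x'
    have h2 : (σ.liftNormal K) x = x := hx _
    have h3 : algebraMap ↥L K (σ x') = algebraMap ↥L K x' := by
      rw [← h1]
      simpa using h2
    exact (algebraMap ↥L K).injective h3
  have hbot : x' ∈ (⊥ : IntermediateField k ↥L) := by
    have h1 : IntermediateField.fixedField (⊤ : Subgroup (↥L ≃ₐ[k] ↥L)) = ⊥ := by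
      rw [← IntermediateField.fixingSubgroup_bot (F := k) (E := ↥L)]
      exact IsGalois.fixedField_fixingSubgroup ⊥
    rw [← h1]
    exact fun σ => hfix σ
  obtain ⟨a, ha⟩ := IntermediateField.mem_bot.mp hbot
  refine ⟨a, ?_⟩
  have : algebraMap ↥L K (algebraMap k ↥L a) = algebraMap ↥L K x' := by rw [ha]
  rwa [← IsScalarTower.algebraMap_apply k ↥L K, show algebraMap ↥L K x' = x from rfl] at this

variable {M : Type*} [AddCommGroup M] [Module K M] [Module k M] [IsScalarTower k K M]

/-- A `k`-linearly independent family of fixed vectors is `K`-linearly independent. -/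
lemma galois_descent_indep (ρ : (K ≃ₐ[k] K) → M ≃+ M)
    (hsemi : ∀ (σ : K ≃ₐ[k] K) (c : K) (m : M), ρ σ (c • m) = σ c • ρ σ m)
    {ι : Type*} (s : ι → M) (hfix : ∀ (i : ι) (σ : K ≃ₐ[k] K), ρ σ (s i) = s i)
    (hs : LinearIndependent k s) : LinearIndependent K s := by
  classical
  rw [linearIndependent_iff']
  intro t
  induction t using Finset.strongInduction with
  | _ t ih =>
    intro g hg
    by_contra hc
    push_neg at hc
    obtain ⟨i0, hi0t, hi0⟩ := hc
    set g' : ι → K := fun i => (g i0)⁻¹ * g i with hg'def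
    have hg'i0 : g' i0 = 1 := inv_mul_cancel₀ hi0
    have hg'sum : ∑ i ∈ t, g' i • s i = 0 := by
      simp only [hg'def, mul_smul, ← Finset.smul_sum, hg, smul_zero]
    have key : ∀ (τ : K ≃ₐ[k] K), ∀ i ∈ t, τ (g' i) = g' i := by
      intro τ
      have h1 : ∑ i ∈ t, τ (g' i) • s i = 0 := by
        have h2 := congrArg (ρ τ) hg'sum
        rw [map_sum, map_zero] at h2
        simpa only [hsemi, hfix] using h2
      have hτ : ∑ i ∈ t, (τ (g' i) - g' i) • s i = 0 := by
        simp only [sub_smul, Finset.sum_sub_distrib, h1, hg'sum, sub_zero]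
      have herase : ∀ i ∈ t.erase i0, τ (g' i) - g' i = 0 := by
        apply ih (t.erase i0) (Finset.erase_ssubset hi0t)
        rw [Finset.sum_erase]
        · exact hτ
        · rw [hg'i0, map_one, sub_self, zero_smul]
      intro i hi
      rcases eq_or_ne i i0 with rfl | hne
      · rw [hg'i0, map_one]
      · exact sub_eq_zero.mp (herase i (Finset.mem_erase.2 ⟨hne, hi⟩))
    have hk : ∀ i ∈ t, ∃ a : k, algebraMap k K a = g' i := fun i hi =>
      fixed_of_all_aut (g' i) fun τ => key τ i hi
    choose! a ha using hk
    have hsum : ∑ i ∈ t, a i • s i = 0 := by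
      calc ∑ i ∈ t, a i • s i = ∑ i ∈ t, g' i • s i :=
            Finset.sum_congr rfl fun i hi => by rw [← ha i hi, algebraMap_smul]
        _ = 0 := hg'sum
    have ha0 := linearIndependent_iff'.mp hs t a hsum i0 hi0t
    apply one_ne_zero (α := K)
    rw [← hg'i0, ← ha i0 hi0t, ha0, map_zero]

end Aux

set_option maxHeartbeats 2000000
set_option synthInstance.maxHeartbeats 80000

/-- **Galois descent for smooth semilinear actions.** Let `K/k` be a
Galois extension with Galois group `G` (with the Krull topology) and `M` a `K`-vector
space with a smooth semilinear `G`-action `ρ`.  Then the fixed points `M^G` form a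
`k`-subspace of `M`, and the canonical `K`-linear map `K ⊗_k M^G → M`, `c ⊗ m ↦ c • m`,
is bijective. -/
theorem galois_descent_bijective
    (k K : Type*) [Field k] [Field K] [Algebra k K] [IsGalois k K]
    (M : Type*) [AddCommGroup M] [Module K M] [Module k M] [IsScalarTower k K M]
    (ρ : (K ≃ₐ[k] K) → M ≃+ M)
    (hone : ρ 1 = AddEquiv.refl M)
    (hmul : ∀ (σ τ : K ≃ₐ[k] K) (m : M), ρ (σ * τ) m = ρ σ (ρ τ m))
    (hsemi : ∀ (σ : K ≃ₐ[k] K) (c : K) (m : M), ρ σ (c • m) = σ c • ρ σ m)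
    (hsmooth : ∀ m : M, IsOpen {σ : K ≃ₐ[k] K | ρ σ m = m}) :
    ∃ S : Submodule k M, (S : Set M) = {m : M | ∀ σ : K ≃ₐ[k] K, ρ σ m = m} ∧
      Function.Bijective (galoisDescentMap k K M S) := by
  classical
  -- the fixed-point submodule
  let S : Submodule k M :=
    { carrier := {m : M | ∀ σ : K ≃ₐ[k] K, ρ σ m = m}
      add_mem' := fun {x y} hx hy σ => by rw [map_add, hx σ, hy σ]
      zero_mem' := fun σ => map_zero (ρ σ)
      smul_mem' := fun a m hm σ => by
        rw [← algebraMap_smul K a m, hsemi, AlgEquiv.commutes, hm σ] }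
  refine ⟨S, rfl, ?_⟩
  -- the `K`-linear version of the descent map
  let f0 : K →ₗ[K] (↥S →ₗ[k] M) :=
    { toFun := fun c => c • (S.subtype)
      map_add' := fun c d => add_smul c d _
      map_smul' := fun c d => by simp [smul_smul] }
  let F : K ⊗[k] ↥S →ₗ[K] M := TensorProduct.AlgebraTensorModule.lift f0
  have hFtmul : ∀ (c : K) (s : ↥S), F (c ⊗ₜ s) = c • (s : M) := fun c s => by
    simp [F, f0, TensorProduct.AlgebraTensorModule.lift_tmul]
  have hF : ⇑(galoisDescentMap k K M S) = ⇑F := by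
    funext x
    induction x using TensorProduct.induction_on with
    | zero => simp
    | tmul c s => rw [hFtmul]; simp [galoisDescentMap]
    | add x y hx hy => rw [map_add, map_add, hx, hy]
  -- injectivity
  let b := Module.Basis.ofVectorSpace k ↥S
  have hsind : LinearIndependent k (fun i => ((b i : ↥S) : M)) :=
    b.linearIndependent.map' S.subtype (Submodule.ker_subtype S)
  have hKind : LinearIndependent K (fun i => ((b i : ↥S) : M)) :=
    galois_descent_indep ρ hsemi _ (fun i σ => (b i).2 σ) hsind
  let bT := Algebra.TensorProduct.basis K b
  have hFb : ∀ i, F (bT i) = ((b i : ↥S) : M) := fun i => by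
    rw [Algebra.TensorProduct.basis_apply, hFtmul, one_smul]
  have hinj : Function.Injective F := by
    intro x y hxy
    have hz : F (x - y) = 0 := by rw [map_sub, hxy, sub_self]
    have h1 : Finsupp.linearCombination K (fun i => ((b i : ↥S) : M)) (bT.repr (x - y)) = 0 := by
      have h2 := congrArg F (bT.linearCombination_repr (x - y))
      rw [Finsupp.apply_linearCombination, hz] at h2
      have hcomp : ⇑F ∘ ⇑bT = fun i => ((b i : ↥S) : M) := funext hFb
      rwa [hcomp] at h2
    have h3 := linearIndependent_iff.mp hKind _ h1
    have h4 : x - y = 0 := by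
      have := congrArg bT.repr.symm (h3 : bT.repr (x - y) = 0)
      simpa using this
    exact sub_eq_zero.mp h4
  -- surjectivity
  have hsurj : ∀ m : M, m ∈ LinearMap.range F := by
    intro m
    have h1 : {σ : K ≃ₐ[k] K | ρ σ m = m} ∈ nhds (1 : K ≃ₐ[k] K) :=
      (hsmooth m).mem_nhds (by simp only [Set.mem_setOf_eq, hone, AddEquiv.refl_apply])
    obtain ⟨E, hEfin, hE⟩ := (krullTopology_mem_nhds_one_iff k K _).mp h1
    haveI := hEfin
    let L : IntermediateField k K := IntermediateField.normalClosure k ↥E K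
    haveI : FiniteDimensional k ↥L := normalClosure.is_finiteDimensional k ↥E K
    have hfixm : ∀ τ : K ≃ₐ[k] K, (∀ x : K, x ∈ L → τ x = x) → ρ τ m = m := by
      intro τ hτ
      apply hE
      show τ ∈ E.fixingSubgroup
      rw [IntermediateField.mem_fixingSubgroup_iff]
      intro x hx
      exact hτ x (E.le_normalClosure hx)
    have agree : ∀ τ₁ τ₂ : K ≃ₐ[k] K, (∀ x : K, x ∈ L → τ₁ x = τ₂ x) → ρ τ₁ m = ρ τ₂ m := by
      intro τ₁ τ₂ h
      have h2 : ρ (τ₂⁻¹ * τ₁) m = m := by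
        apply hfixm
        intro x hx
        show τ₂⁻¹ (τ₁ x) = x
        rw [h x hx]
        exact τ₂.symm_apply_apply x
      calc ρ τ₁ m = ρ (τ₂ * (τ₂⁻¹ * τ₁)) m := by rw [mul_inv_cancel_left]
        _ = ρ τ₂ (ρ (τ₂⁻¹ * τ₁) m) := hmul _ _ _
        _ = ρ τ₂ m := by rw [h2]
    -- a section of restriction over the algebra homs `L →ₐ[k] K`
    let φ0 : ↥L →ₐ[k] K := L.val
    let lift : (↥L →ₐ[k] K) → (K ≃ₐ[k] K) := fun φ =>
      if φ = φ0 then 1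
      else AlgEquiv.ofBijective (φ.liftNormal K) (AlgHom.normal_bijective k K K _)
    have hlift : ∀ (φ : ↥L →ₐ[k] K) (x : ↥L), lift φ ↑x = φ x := by
      intro φ x
      by_cases h : φ = φ0
      · subst h
        simp [lift, φ0]
      · simp only [lift, if_neg h, AlgEquiv.coe_ofBijective]
        simpa using AlgHom.liftNormal_commutes φ K x
    have hlift0 : lift φ0 = 1 := if_pos rfl
    -- the fixed elements
    let T : ↥L → M := fun c => ∑ φ : (↥L →ₐ[k] K), φ c • ρ (lift φ) m
    have hTfix : ∀ c : ↥L, ∀ τ : K ≃ₐ[k] K, ρ τ (T c) = T c := by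
      intro c τ
      have expand : ρ τ (T c) = ∑ φ : (↥L →ₐ[k] K), τ (φ c) • ρ (τ * lift φ) m := by
        rw [map_sum]
        exact Finset.sum_congr rfl fun φ _ => by rw [hsemi, ← hmul]
      rw [expand]
      let e : (↥L →ₐ[k] K) ≃ (↥L →ₐ[k] K) :=
        { toFun := fun φ => ((τ : K →ₐ[k] K)).comp φ
          invFun := fun φ => (((τ⁻¹ : K ≃ₐ[k] K) : K →ₐ[k] K)).comp φ
          left_inv := fun φ => by ext x; exact τ.symm_apply_apply (φ x)
          right_inv := fun φ => by ext x; exact τ.apply_symm_apply (φ x) }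
      calc ∑ φ : (↥L →ₐ[k] K), τ (φ c) • ρ (τ * lift φ) m
          = ∑ φ : (↥L →ₐ[k] K), (e φ) c • ρ (lift (e φ)) m := by
            refine Finset.sum_congr rfl fun φ _ => ?_
            have hρ : ρ (τ * lift φ) m = ρ (lift (e φ)) m := by
              apply agree
              intro x hx
              have hx1 : (τ * lift φ) x = τ (φ ⟨x, hx⟩) := congrArg τ (hlift φ ⟨x, hx⟩)
              have hx2 : (lift (e φ)) x = τ (φ ⟨x, hx⟩) := hlift (e φ) ⟨x, hx⟩
              rw [hx1, hx2]
            rw [hρ]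
            rfl
        _ = T c := Equiv.sum_comp e (fun ψ => ψ c • ρ (lift ψ) m)
    have hTS : ∀ c, T c ∈ S := fun c => hTfix c
    -- the evaluation machinery
    let P : ((↥L →ₐ[k] K) → K) →ₗ[K] M :=
      { toFun := fun a => ∑ φ : (↥L →ₐ[k] K), a φ • ρ (lift φ) m
        map_add' := fun a b => by
          simp only [Pi.add_apply, add_smul, Finset.sum_add_distrib]
        map_smul' := fun c a => by
          simp only [Pi.smul_apply, smul_eq_mul, RingHom.id_apply, Finset.smul_sum, smul_smul] }
    let v : ↥L → ((↥L →ₐ[k] K) → K) := fun c φ => φ c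
    have hPv : ∀ c, P (v c) = T c := fun c => rfl
    have hWtop : Submodule.span K (Set.range v) = ⊤ := by
      by_contra hW
      obtain ⟨f, hf0, hmap⟩ :=
        Submodule.exists_dual_map_eq_bot_of_lt_top (lt_top_iff_ne_top.2 hW) inferInstance
      let a : (↥L →ₐ[k] K) → K := fun φ => f (Pi.single φ 1)
      have hfa : ∀ g : (↥L →ₐ[k] K) → K, f g = ∑ φ : (↥L →ₐ[k] K), g φ * a φ := by
        intro g
        conv_lhs => rw [← Finset.univ_sum_single g, map_sum]
        refine Finset.sum_congr rfl fun φ _ => ?_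
        have hsingle : Pi.single (M := fun _ : (↥L →ₐ[k] K) => K) φ (g φ) = g φ • Pi.single (M := fun _ : (↥L →ₐ[k] K) => K) φ 1 := by
          rw [← Pi.single_smul, smul_eq_mul, mul_one]
        rw [hsingle, map_smul, smul_eq_mul]
      have ha0 : ∀ c : ↥L, ∑ φ : (↥L →ₐ[k] K), a φ * φ c = 0 := by
        intro c
        have hvc : f (v c) = 0 := by
          have hmem : f (v c) ∈ Submodule.map f (Submodule.span K (Set.range v)) :=
            Submodule.mem_map_of_mem (Submodule.subset_span ⟨c, rfl⟩)
          rwa [hmap, Submodule.mem_bot] at hmem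
        rw [hfa] at hvc
        rw [← hvc]
        exact Finset.sum_congr rfl fun φ _ => mul_comm _ _
      have hind : LinearIndependent K (fun φ : (↥L →ₐ[k] K) => (φ : ↥L → K)) := by
        have h1 := linearIndependent_monoidHom ↥L K
        have h2 : Function.Injective (fun φ : (↥L →ₐ[k] K) => (φ : ↥L →* K)) := by
          intro φ ψ h
          ext x
          exact congrFun (congrArg (fun (f : ↥L →* K) => (f : ↥L → K)) h) x
        exact h1.comp _ h2
      have hazero : ∀ φ, a φ = 0 := by
        apply Fintype.linearIndependent_iff.mp hind a
        funext c
        simpa [Finset.sum_apply] using ha0 c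
      apply hf0
      apply LinearMap.ext
      intro g
      rw [hfa]
      simp [hazero]
    let u : (↥L →ₐ[k] K) → K := Pi.single φ0 1
    have hm : m = P u := by
      show m = ∑ φ : (↥L →ₐ[k] K), u φ • ρ (lift φ) m
      rw [Finset.sum_eq_single φ0]
      · show m = Pi.single (M := fun _ : (↥L →ₐ[k] K) => K) φ0 1 φ0 • ρ (lift φ0) m
        rw [hlift0, hone, Pi.single_eq_same, one_smul]
        rfl
      · intro ψ _ hψ
        show Pi.single (M := fun _ : (↥L →ₐ[k] K) => K) φ0 1 ψ • ρ (lift ψ) m = 0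
        rw [Pi.single_eq_of_ne hψ, zero_smul]
      · intro h
        exact absurd (Finset.mem_univ φ0) h
    have hmem : m ∈ Submodule.map P (Submodule.span K (Set.range v)) :=
      ⟨u, by rw [hWtop]; trivial, hm.symm⟩
    rw [Submodule.map_span] at hmem
    have hle : Submodule.span K (⇑P '' Set.range v) ≤ LinearMap.range F := by
      rw [Submodule.span_le]
      rintro _ ⟨_, ⟨c, rfl⟩, rfl⟩
      rw [hPv]
      exact ⟨(1 : K) ⊗ₜ (⟨T c, hTS c⟩ : ↥S), by rw [hFtmul, one_smul]⟩
    exact hle hmem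
  rw [hF]
  exact ⟨hinj, fun m => (hsurj m).imp fun x hx => hx⟩
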